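/- Let (H, R) be a quasitriangular Hopf algebra and set W = R²¹R. Then the element (S ⊗ id)(W) ∈ H ⊗ H is invariant under the diagonal adjoint action: for all a ∈ H, Σ a₁ S(W₁) S(a₂) ⊗ a₃ W₂ S(a₄) = ε(a) (S ⊗ id)(W), where W = Σ W₁ ⊗ W₂. -/

import Mathlib

open TensorProduct

section Frozen
variable (k H : Type*) [Field k] [Ring H] [HopfAlgebra k H]

/-- Embedding `H ⊗ H → H ⊗ H ⊗ H` on legs 1 and 2. -/
noncomputable def leg12 : H ⊗[k] H →ₐ[k] H ⊗[k] (H ⊗[k] H) :=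
  Algebra.TensorProduct.map (AlgHom.id k H) Algebra.TensorProduct.includeLeft

/-- Embedding `H ⊗ H → H ⊗ H ⊗ H` on legs 1 and 3. -/
noncomputable def leg13 : H ⊗[k] H →ₐ[k] H ⊗[k] (H ⊗[k] H) :=
  Algebra.TensorProduct.map (AlgHom.id k H) Algebra.TensorProduct.includeRight

/-- Embedding `H ⊗ H → H ⊗ H ⊗ H` on legs 2 and 3. -/
noncomputable def leg23 : H ⊗[k] H →ₐ[k] H ⊗[k] (H ⊗[k] H) :=
  Algebra.TensorProduct.includeRight


/-- The map `a ↦ Σ (a₁ ⊗ a₃) ⊗ (a₂ ⊗ a₄)` built from the iterated coproduct. -/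
noncomputable def comulFour : H →ₗ[k] (H ⊗[k] H) ⊗[k] (H ⊗[k] H) :=
  (TensorProduct.tensorTensorTensorComm k H H H H).toLinearMap ∘ₗ
    (TensorProduct.map (Coalgebra.comul (R := k)) (Coalgebra.comul (R := k))) ∘ₗ
      (Coalgebra.comul (R := k))

/-- The diagonal adjoint action of `a` on `X ∈ H ⊗ H`:
`(P ⊗ Q) ↦ P * X * (S ⊗ S)(Q)`, precomposed with `comulFour` this gives
`a · X = Σ (a₁ X₁ S(a₂)) ⊗ (a₃ X₂ S(a₄))`. -/
noncomputable def adAct (X : H ⊗[k] H) : (H ⊗[k] H) ⊗[k] (H ⊗[k] H) →ₗ[k] H ⊗[k] H :=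
  (LinearMap.mul' k (H ⊗[k] H)) ∘ₗ
    (TensorProduct.map (LinearMap.mulRight k X)
      (TensorProduct.map (HopfAlgebra.antipode (R := k)) (HopfAlgebra.antipode (R := k))))

end Frozen

open Coalgebra HopfAlgebra

set_option maxHeartbeats 1000000
set_option synthInstance.maxHeartbeats 400000

section Aux
variable {k H : Type*} [Field k] [Ring H] [HopfAlgebra k H]


local notation "𝒮" => HopfAlgebra.antipode (R := k) (A := H)
local notation "ε" => Coalgebra.counit (R := k) (A := H)
local notation "Δ" => Coalgebra.comul (R := k) (A := H)

/-- A representation of `comul (u * v)` from representations of `u` and `v`. -/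
noncomputable def prodRepr {u v : H} (ru : Coalgebra.Repr k u (H × H)) (rv : Coalgebra.Repr k v (H × H)) :
    Coalgebra.Repr k (u * v) ((H × H) × (H × H)) where
  index := ru.index ×ˢ rv.index
  left := fun p => ru.left p.1 * rv.left p.2
  right := fun p => ru.right p.1 * rv.right p.2
  eq := by
    rw [Bialgebra.comul_mul, ← ru.eq, ← rv.eq, Finset.sum_mul_sum, Finset.sum_product]
    simp [Algebra.TensorProduct.tmul_mul_tmul]

noncomputable def M6 : (H ⊗[k] (H ⊗[k] H)) ⊗[k] (H ⊗[k] (H ⊗[k] H)) →ₗ[k] H :=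
  LinearMap.mul' k H ∘ₗ
    map (𝒮 ∘ₗ LinearMap.mul' k H)
      (LinearMap.mul' k H ∘ₗ
        map (LinearMap.mul' k H)
          (LinearMap.mul' k H ∘ₗ map 𝒮 𝒮 ∘ₗ (TensorProduct.comm k H H).toLinearMap) ∘ₗ
        (tensorTensorTensorComm k H H H H).toLinearMap) ∘ₗ
    (tensorTensorTensorComm k H (H ⊗[k] H) H (H ⊗[k] H)).toLinearMap

@[simp] lemma M6_tmul (x₁ x₂ x₃ y₁ y₂ y₃ : H) :
    M6 ((x₁ ⊗ₜ[k] (x₂ ⊗ₜ[k] x₃)) ⊗ₜ[k] (y₁ ⊗ₜ[k] (y₂ ⊗ₜ[k] y₃)))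
      = 𝒮 (x₁ * y₁) * (x₂ * y₂ * (𝒮 y₃ * 𝒮 x₃)) := by
  simp [M6, LinearMap.mul'_apply, mul_assoc]

lemma coreB (c d u v : H) :
    M6 ((c ⊗ₜ[k] Δ u) ⊗ₜ[k] (d ⊗ₜ[k] Δ v)) = (ε u * ε v) • 𝒮 (c * d) := by
  classical
  set ru := Coalgebra.Repr.arbitrary k u
  set rv := Coalgebra.Repr.arbitrary k v
  rw [← ru.eq, ← rv.eq]
  simp only [tmul_sum, sum_tmul, map_sum, M6_tmul]
  have inner : ∀ j, ∑ q ∈ rv.index,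
      ru.left j * rv.left q * (𝒮 (rv.right q) * 𝒮 (ru.right j))
        = counit (R := k) v • (ru.left j * 𝒮 (ru.right j)) := by
    intro j
    calc ∑ q ∈ rv.index, ru.left j * rv.left q * (𝒮 (rv.right q) * 𝒮 (ru.right j))
        = ∑ q ∈ rv.index, ru.left j * ((rv.left q * 𝒮 (rv.right q)) * 𝒮 (ru.right j)) := by
          refine Finset.sum_congr rfl fun q _ => ?_
          rw [mul_assoc, ← mul_assoc (rv.left q)]
      _ = ru.left j * ((∑ q ∈ rv.index, rv.left q * 𝒮 (rv.right q)) * 𝒮 (ru.right j)) := by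
          rw [← Finset.mul_sum, ← Finset.sum_mul]
      _ = counit (R := k) v • (ru.left j * 𝒮 (ru.right j)) := by
          rw [sum_mul_antipode_eq_smul rv]
          simp [smul_mul_assoc, mul_smul_comm]
  rw [Finset.sum_comm]
  calc ∑ j ∈ ru.index, ∑ q ∈ rv.index,
        𝒮 (c * d) * (ru.left j * rv.left q * (𝒮 (rv.right q) * 𝒮 (ru.right j)))
      = 𝒮 (c * d) * ∑ j ∈ ru.index, ∑ q ∈ rv.index,
          ru.left j * rv.left q * (𝒮 (rv.right q) * 𝒮 (ru.right j)) := by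
        simp only [Finset.mul_sum]
    _ = 𝒮 (c * d) * ∑ j ∈ ru.index, counit (R := k) v • (ru.left j * 𝒮 (ru.right j)) := by
        simp only [inner]
    _ = (ε u * ε v) • 𝒮 (c * d) := by
        rw [← Finset.smul_sum, sum_mul_antipode_eq_smul ru]
        rw [smul_smul, mul_comm (counit v)]
        simp [mul_smul_comm]

lemma coreA (c d u v : H) :
    M6 ((TensorProduct.assoc k H H H) (Δ u ⊗ₜ[k] c) ⊗ₜ[k]
        (TensorProduct.assoc k H H H) (Δ v ⊗ₜ[k] d)) = (ε u * ε v) • (𝒮 d * 𝒮 c) := by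
  classical
  set ru := Coalgebra.Repr.arbitrary k u
  set rv := Coalgebra.Repr.arbitrary k v
  rw [← ru.eq, ← rv.eq]
  simp only [sum_tmul, tmul_sum, map_sum, assoc_tmul, M6_tmul]
  rw [Finset.sum_comm]
  calc ∑ j ∈ ru.index, ∑ q ∈ rv.index,
        𝒮 (ru.left j * rv.left q) * (ru.right j * rv.right q * (𝒮 d * 𝒮 c))
      = ∑ j ∈ ru.index, ∑ q ∈ rv.index,
          𝒮 (ru.left j * rv.left q) * (ru.right j * rv.right q) * (𝒮 d * 𝒮 c) := by
        refine Finset.sum_congr rfl fun j _ => Finset.sum_congr rfl fun q _ => ?_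
        rw [← mul_assoc]
    _ = (∑ j ∈ ru.index, ∑ q ∈ rv.index,
          𝒮 (ru.left j * rv.left q) * (ru.right j * rv.right q)) * (𝒮 d * 𝒮 c) := by
        simp only [Finset.sum_mul]
    _ = (counit (R := k) (u * v) • (1 : H)) * (𝒮 d * 𝒮 c) := by
        rw [← Finset.sum_product']
        exact congrArg (· * (𝒮 d * 𝒮 c)) (sum_antipode_mul_eq_smul (prodRepr ru rv))
    _ = (ε u * ε v) • (𝒮 d * 𝒮 c) := by
        rw [Bialgebra.counit_mul]
        simp [smul_mul_assoc]

lemma repr_counit_right {a : H} (r : Coalgebra.Repr k a (H × H)) :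
    ∑ i ∈ r.index, Coalgebra.counit (R := k) (r.right i) • r.left i = a := by
  have h := congrArg (TensorProduct.rid k H) (Coalgebra.sum_tmul_counit_eq (R := k) r)
  simp only [map_sum, rid_tmul, one_smul] at h
  exact h

lemma repr_counit_left {a : H} (r : Coalgebra.Repr k a (H × H)) :
    ∑ i ∈ r.index, Coalgebra.counit (R := k) (r.left i) • r.right i = a := by
  have h := congrArg (TensorProduct.lid k H) (Coalgebra.sum_counit_tmul_eq (R := k) r)
  simp only [map_sum, lid_tmul, one_smul] at h
  exact h

theorem antipode_mul' (x y : H) : 𝒮 (x * y) = 𝒮 y * 𝒮 x := by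
  classical
  set rx := Coalgebra.Repr.arbitrary k x with hrxdef
  set ry := Coalgebra.Repr.arbitrary k y with hrydef
  set rx1 : ∀ i, Coalgebra.Repr k (rx.left i) (H × H) := fun i => Coalgebra.Repr.arbitrary k _
  set rx2 : ∀ i, Coalgebra.Repr k (rx.right i) (H × H) := fun i => Coalgebra.Repr.arbitrary k _
  set ry1 : ∀ i, Coalgebra.Repr k (ry.left i) (H × H) := fun i => Coalgebra.Repr.arbitrary k _
  set ry2 : ∀ i, Coalgebra.Repr k (ry.right i) (H × H) := fun i => Coalgebra.Repr.arbitrary k _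
  have hx := Coalgebra.sum_tmul_tmul_eq (R := k) rx rx1 rx2
  have hy := Coalgebra.sum_tmul_tmul_eq (R := k) ry ry1 ry2
  have hSy : ∑ p ∈ ry.index, ε (ry.left p) • 𝒮 (ry.right p) = 𝒮 y := by
    conv_rhs => rw [← repr_counit_left ry]
    rw [map_sum]
    exact Finset.sum_congr rfl fun p _ => by rw [map_smul]
  have hSx : ∑ i ∈ rx.index, ε (rx.left i) • 𝒮 (rx.right i) = 𝒮 x := by
    conv_rhs => rw [← repr_counit_left rx]
    rw [map_sum]
    exact Finset.sum_congr rfl fun p _ => by rw [map_smul]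
  have hXr : (∑ i ∈ rx.index, ∑ j ∈ (rx2 i).index,
      rx.left i ⊗ₜ[k] ((rx2 i).left j ⊗ₜ[k] (rx2 i).right j))
      = ∑ i ∈ rx.index, rx.left i ⊗ₜ[k] Δ (rx.right i) :=
    Finset.sum_congr rfl fun i _ => by rw [← TensorProduct.tmul_sum, (rx2 i).eq]
  have hYr : (∑ i ∈ ry.index, ∑ j ∈ (ry2 i).index,
      ry.left i ⊗ₜ[k] ((ry2 i).left j ⊗ₜ[k] (ry2 i).right j))
      = ∑ i ∈ ry.index, ry.left i ⊗ₜ[k] Δ (ry.right i) :=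
    Finset.sum_congr rfl fun i _ => by rw [← TensorProduct.tmul_sum, (ry2 i).eq]
  have hXl : (∑ i ∈ rx.index, ∑ j ∈ (rx1 i).index,
      (rx1 i).left j ⊗ₜ[k] ((rx1 i).right j ⊗ₜ[k] rx.right i))
      = ∑ i ∈ rx.index, (TensorProduct.assoc k H H H) (Δ (rx.left i) ⊗ₜ[k] rx.right i) :=
    Finset.sum_congr rfl fun i _ => by
      rw [← (rx1 i).eq, sum_tmul, map_sum]
      exact Finset.sum_congr rfl fun j _ => by rw [assoc_tmul]
  have hYl : (∑ i ∈ ry.index, ∑ j ∈ (ry1 i).index,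
      (ry1 i).left j ⊗ₜ[k] ((ry1 i).right j ⊗ₜ[k] ry.right i))
      = ∑ i ∈ ry.index, (TensorProduct.assoc k H H H) (Δ (ry.left i) ⊗ₜ[k] ry.right i) :=
    Finset.sum_congr rfl fun i _ => by
      rw [← (ry1 i).eq, sum_tmul, map_sum]
      exact Finset.sum_congr rfl fun j _ => by rw [assoc_tmul]
  have key : M6 ((∑ i ∈ rx.index, (TensorProduct.assoc k H H H) (Δ (rx.left i) ⊗ₜ[k] rx.right i))
        ⊗ₜ[k] (∑ i ∈ ry.index, (TensorProduct.assoc k H H H) (Δ (ry.left i) ⊗ₜ[k] ry.right i)))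
      = M6 ((∑ i ∈ rx.index, rx.left i ⊗ₜ[k] Δ (rx.right i))
        ⊗ₜ[k] (∑ i ∈ ry.index, ry.left i ⊗ₜ[k] Δ (ry.right i))) := by
    rw [← hXr, ← hYr, ← hXl, ← hYl, hx, hy]
  have eA : M6 ((∑ i ∈ rx.index, (TensorProduct.assoc k H H H) (Δ (rx.left i) ⊗ₜ[k] rx.right i))
        ⊗ₜ[k] (∑ i ∈ ry.index, (TensorProduct.assoc k H H H) (Δ (ry.left i) ⊗ₜ[k] ry.right i)))
      = 𝒮 y * 𝒮 x := by
    rw [sum_tmul, map_sum]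
    calc ∑ i ∈ rx.index, M6 ((TensorProduct.assoc k H H H) (Δ (rx.left i) ⊗ₜ[k] rx.right i)
            ⊗ₜ[k] (∑ p ∈ ry.index, (TensorProduct.assoc k H H H) (Δ (ry.left p) ⊗ₜ[k] ry.right p)))
        = ∑ i ∈ rx.index, ∑ p ∈ ry.index,
            (ε (rx.left i) * ε (ry.left p)) • (𝒮 (ry.right p) * 𝒮 (rx.right i)) := by
          refine Finset.sum_congr rfl fun i _ => ?_
          rw [tmul_sum, map_sum]
          exact Finset.sum_congr rfl fun p _ => coreA _ _ _ _
      _ = ∑ i ∈ rx.index, ε (rx.left i) •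
            ((∑ p ∈ ry.index, ε (ry.left p) • 𝒮 (ry.right p)) * 𝒮 (rx.right i)) := by
          refine Finset.sum_congr rfl fun i _ => ?_
          rw [Finset.sum_mul, Finset.smul_sum]
          refine Finset.sum_congr rfl fun p _ => ?_
          rw [smul_mul_assoc, smul_smul]
      _ = ∑ i ∈ rx.index, 𝒮 y * (ε (rx.left i) • 𝒮 (rx.right i)) := by
          rw [hSy]
          exact Finset.sum_congr rfl fun i _ => (mul_smul_comm _ _ _).symm
      _ = 𝒮 y * 𝒮 x := by rw [← Finset.mul_sum, hSx]
  have eB : M6 ((∑ i ∈ rx.index, rx.left i ⊗ₜ[k] Δ (rx.right i))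
        ⊗ₜ[k] (∑ i ∈ ry.index, ry.left i ⊗ₜ[k] Δ (ry.right i)))
      = 𝒮 (x * y) := by
    rw [sum_tmul, map_sum]
    calc ∑ i ∈ rx.index, M6 ((rx.left i ⊗ₜ[k] Δ (rx.right i))
            ⊗ₜ[k] (∑ p ∈ ry.index, ry.left p ⊗ₜ[k] Δ (ry.right p)))
        = ∑ i ∈ rx.index, ∑ p ∈ ry.index,
            (ε (rx.right i) * ε (ry.right p)) • 𝒮 (rx.left i * ry.left p) := by
          refine Finset.sum_congr rfl fun i _ => ?_
          rw [tmul_sum, map_sum]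
          exact Finset.sum_congr rfl fun p _ => coreB _ _ _ _
      _ = ∑ i ∈ rx.index, ε (rx.right i) • 𝒮 (rx.left i * y) := by
          refine Finset.sum_congr rfl fun i _ => ?_
          conv_rhs => rw [← repr_counit_right ry]
          rw [Finset.mul_sum, map_sum, Finset.smul_sum]
          refine Finset.sum_congr rfl fun p _ => ?_
          rw [mul_smul_comm, map_smul, smul_smul]
      _ = 𝒮 (x * y) := by
          conv_rhs => rw [← repr_counit_right rx]
          rw [Finset.sum_mul, map_sum]
          exact Finset.sum_congr rfl fun i _ => by rw [smul_mul_assoc, map_smul]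
  rw [← eB, ← key, eA]









lemma comm_mul_aux (x y : H ⊗[k] H) :
    (TensorProduct.comm k H H) (x * y)
      = (TensorProduct.comm k H H) x * (TensorProduct.comm k H H) y := by
  induction x using TensorProduct.induction_on with
  | zero => simp
  | tmul a b =>
    induction y using TensorProduct.induction_on with
    | zero => simp
    | tmul c d => simp [Algebra.TensorProduct.tmul_mul_tmul]
    | add u v hu hv => simp [mul_add, hu, hv]
  | add u v hu hv => simp [add_mul, hu, hv]

lemma comm_comm_aux (x : H ⊗[k] H) :
    (TensorProduct.comm k H H) ((TensorProduct.comm k H H) x) = x := by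
  induction x using TensorProduct.induction_on with
  | zero => simp
  | tmul a b => simp
  | add u v hu hv => simp [hu, hv]

lemma commW_aux (R : H ⊗[k] H)
    (h3 : ∀ h : H, (TensorProduct.comm k H H) (Δ h) * R = R * Δ h) (h : H) :
    Δ h * ((TensorProduct.comm k H H) R * R) = ((TensorProduct.comm k H H) R * R) * Δ h := by
  have hτ : Δ h * (TensorProduct.comm k H H) R
      = (TensorProduct.comm k H H) R * (TensorProduct.comm k H H) (Δ h) := by
    have := congrArg (TensorProduct.comm k H H) (h3 h)
    rw [comm_mul_aux, comm_mul_aux, comm_comm_aux] at this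
    exact this
  rw [← mul_assoc, hτ, mul_assoc, h3 h, ← mul_assoc]

lemma fourfold {a : H} (r : Coalgebra.Repr k a (H × H))
    (rL : ∀ i, Coalgebra.Repr k (r.left i) (H × H)) (rR : ∀ i, Coalgebra.Repr k (r.right i) (H × H))
    (rRL : ∀ i t, Coalgebra.Repr k ((rR i).left t) (H × H))
    (rRR : ∀ i t, Coalgebra.Repr k ((rR i).right t) (H × H)) :
    ∑ i ∈ r.index, ∑ t ∈ (rR i).index, ∑ s ∈ (rRL i t).index,
      (r.left i ⊗ₜ[k] (rRL i t).left s) ⊗ₜ[k] ((rRL i t).right s ⊗ₜ[k] (rR i).right t)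
      = ∑ i ∈ r.index, Δ (r.left i) ⊗ₜ[k] Δ (r.right i) := by
  classical
  -- inner coassociativity, for each i
  have part1 : ∀ i, ∑ t ∈ (rR i).index, ∑ s ∈ (rRL i t).index,
      (r.left i ⊗ₜ[k] (rRL i t).left s) ⊗ₜ[k] ((rRL i t).right s ⊗ₜ[k] (rR i).right t)
      = ∑ t ∈ (rR i).index, (r.left i ⊗ₜ[k] (rR i).left t) ⊗ₜ[k] Δ ((rR i).right t) := by
    intro i
    have hin := Coalgebra.sum_tmul_tmul_eq (R := k) (rR i) (rRL i) (rRR i)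
    have := congrArg ((TensorProduct.assoc k H H (H ⊗[k] H)).symm.toLinearMap ∘ₗ
      (TensorProduct.mk k H (H ⊗[k] (H ⊗[k] H))) (r.left i)) hin
    simp only [LinearMap.coe_comp, Function.comp_apply, LinearEquiv.coe_coe, map_sum,
      mk_apply, tmul_sum, assoc_symm_tmul] at this
    rw [this]
    refine Finset.sum_congr rfl fun t _ => ?_
    rw [← TensorProduct.tmul_sum, (rRR i t).eq]
  -- outer coassociativity
  have houter := Coalgebra.sum_tmul_tmul_eq (R := k) r rL rR
  have h2 := congrArg ((LinearMap.lTensor (H ⊗[k] H) Δ) ∘ₗ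
    (TensorProduct.assoc k H H H).symm.toLinearMap) houter
  simp only [LinearMap.coe_comp, Function.comp_apply, LinearEquiv.coe_coe, map_sum,
    assoc_symm_tmul, LinearMap.lTensor_tmul] at h2
  calc ∑ i ∈ r.index, ∑ t ∈ (rR i).index, ∑ s ∈ (rRL i t).index,
        (r.left i ⊗ₜ[k] (rRL i t).left s) ⊗ₜ[k] ((rRL i t).right s ⊗ₜ[k] (rR i).right t)
      = ∑ i ∈ r.index, ∑ t ∈ (rR i).index,
          (r.left i ⊗ₜ[k] (rR i).left t) ⊗ₜ[k] Δ ((rR i).right t) :=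
        Finset.sum_congr rfl fun i _ => part1 i
    _ = ∑ i ∈ r.index, ∑ j ∈ (rL i).index,
          ((rL i).left j ⊗ₜ[k] (rL i).right j) ⊗ₜ[k] Δ (r.right i) := h2.symm
    _ = ∑ i ∈ r.index, Δ (r.left i) ⊗ₜ[k] Δ (r.right i) := by
        refine Finset.sum_congr rfl fun i _ => ?_
        rw [← TensorProduct.sum_tmul, (rL i).eq]

end Aux




variable (k H : Type*) [Field k] [Ring H] [HopfAlgebra k H]

local notation "𝒮" => HopfAlgebra.antipode (R := k) (A := H)

/-- `(u, v) ↦ u * S v` on `H ⊗ H`. -/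
noncomputable def Jmap : H ⊗[k] H →ₗ[k] H :=
  LinearMap.mul' k H ∘ₗ LinearMap.lTensor H (HopfAlgebra.antipode (R := k))

@[simp] lemma Jmap_tmul (u v : H) : Jmap k H (u ⊗ₜ[k] v) = u * 𝒮 v := by
  simp [Jmap]

lemma Jmap_comul (u : H) :
    Jmap k H (Coalgebra.comul (R := k) u) = Coalgebra.counit (R := k) u • (1 : H) := by
  have := HopfAlgebra.mul_antipode_lTensor_comul_apply (R := k) u
  simpa [Jmap, Algebra.algebraMap_eq_smul_one] using this

noncomputable def Fmap (l n : H) : H ⊗[k] H →ₗ[k] H ⊗[k] H :=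
  LinearMap.mulRight k ((1 : H) ⊗ₜ[k] 𝒮 n) ∘ₗ LinearMap.mulLeft k (l ⊗ₜ[k] (1 : H)) ∘ₗ
    map (HopfAlgebra.antipode (R := k)) LinearMap.id

@[simp] lemma Fmap_tmul (l n p q : H) :
    Fmap k H l n (p ⊗ₜ[k] q) = (l * 𝒮 p) ⊗ₜ[k] (q * 𝒮 n) := by
  simp [Fmap, Algebra.TensorProduct.tmul_mul_tmul]

noncomputable def Bmap (V : H ⊗[k] H) : H ⊗[k] H →ₗ[k] H ⊗[k] H :=
  LinearMap.mul' k (H ⊗[k] H) ∘ₗ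
    map (LinearMap.mulRight k V ∘ₗ Algebra.TensorProduct.includeLeft.toLinearMap)
      (Algebra.TensorProduct.includeRight.toLinearMap)

@[simp] lemma Bmap_tmul (V : H ⊗[k] H) (u v : H) :
    Bmap k H V (u ⊗ₜ[k] v) = ((u ⊗ₜ[k] (1 : H)) * V) * ((1 : H) ⊗ₜ[k] v) := by
  simp [Bmap]

/-- `(S ⊗ id)(R²¹R)` is invariant under the diagonal adjoint action:
`Σ a₁ S(W₁) S(a₂) ⊗ a₃ W₂ S(a₄) = ε(a) (S ⊗ id)(W)`. -/
theorem ad_invariance_of_SW (R Ri : H ⊗[k] H)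
    (hinv : R * Ri = 1) (hinv' : Ri * R = 1)
    (h1 : (Algebra.TensorProduct.assoc k k k H H H)
        ((TensorProduct.map (Coalgebra.comul (R := k)) LinearMap.id) R)
      = leg13 k H R * leg23 k H R)
    (h2 : (TensorProduct.map LinearMap.id (Coalgebra.comul (R := k))) R
      = leg13 k H R * leg12 k H R)
    (h3 : ∀ h : H,
      (TensorProduct.comm k H H) (Coalgebra.comul (R := k) h) * R
        = R * Coalgebra.comul (R := k) h)
    :
    ∀ a : H,
      adAct k H ((TensorProduct.map (HopfAlgebra.antipode (R := k)) LinearMap.id)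
          ((TensorProduct.comm k H H) R * R)) (comulFour k H a)
        = Coalgebra.counit (R := k) a •
            ((TensorProduct.map (HopfAlgebra.antipode (R := k)) LinearMap.id)
              ((TensorProduct.comm k H H) R * R)) := by
  intro a
  classical
  set W := (TensorProduct.comm k H H) R * R with hWdef
  set V := (TensorProduct.map (HopfAlgebra.antipode (R := k)) LinearMap.id) W with hVdef
  obtain ⟨sW, hsW⟩ := TensorProduct.exists_finset (R := k) W
  have hV : V = ∑ w ∈ sW, 𝒮 w.1 ⊗ₜ[k] w.2 := by
    rw [hVdef, hsW, map_sum]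
    exact Finset.sum_congr rfl fun w _ => by simp
  set r := Coalgebra.Repr.arbitrary k a with hr
  set rL : ∀ i, Coalgebra.Repr k (r.left i) (H × H) := fun i => Coalgebra.Repr.arbitrary k _ with hrL
  set rR : ∀ i, Coalgebra.Repr k (r.right i) (H × H) := fun i => Coalgebra.Repr.arbitrary k _ with hrR
  set rRL : ∀ i t, Coalgebra.Repr k ((rR i).left t) (H × H) :=
    fun i t => Coalgebra.Repr.arbitrary k _ with hrRL
  set rRR : ∀ i t, Coalgebra.Repr k ((rR i).right t) (H × H) :=
    fun i t => Coalgebra.Repr.arbitrary k _ with hrRR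
  have I3 := fourfold r rL rR rRL rRR
  have hcomm : ∀ h : H, Coalgebra.comul (R := k) h * W = W * Coalgebra.comul (R := k) h :=
    commW_aux R h3
  -- expansions of Δ(m) * W and W * Δ(m)
  have e1 : ∀ i t, Coalgebra.comul (R := k) ((rR i).left t) * W
      = ∑ s ∈ (rRL i t).index, ∑ w ∈ sW,
          ((rRL i t).left s * w.1) ⊗ₜ[k] ((rRL i t).right s * w.2) := by
    intro i t
    rw [← (rRL i t).eq, hsW, Finset.sum_mul_sum]
    exact Finset.sum_congr rfl fun s _ => Finset.sum_congr rfl fun w _ => by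
      rw [Algebra.TensorProduct.tmul_mul_tmul]
  have e2 : ∀ i t, W * Coalgebra.comul (R := k) ((rR i).left t)
      = ∑ s ∈ (rRL i t).index, ∑ w ∈ sW,
          (w.1 * (rRL i t).left s) ⊗ₜ[k] (w.2 * (rRL i t).right s) := by
    intro i t
    rw [← (rRL i t).eq, hsW, Finset.sum_mul_sum, Finset.sum_comm]
    exact Finset.sum_congr rfl fun s _ => Finset.sum_congr rfl fun w _ => by
      rw [Algebra.TensorProduct.tmul_mul_tmul]
  -- `comulFour` in a convenient 4-fold form
  have hc4 : comulFour k H a = ∑ i ∈ r.index, ∑ t ∈ (rR i).index, ∑ s ∈ (rRL i t).index,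
      (r.left i ⊗ₜ[k] (rRL i t).right s) ⊗ₜ[k] ((rRL i t).left s ⊗ₜ[k] (rR i).right t) := by
    have h0 : comulFour k H a = (tensorTensorTensorComm k H H H H)
        (∑ i ∈ r.index, Coalgebra.comul (R := k) (r.left i) ⊗ₜ[k]
          Coalgebra.comul (R := k) (r.right i)) := by
      simp only [comulFour, LinearMap.coe_comp, Function.comp_apply, LinearEquiv.coe_coe]
      rw [← r.eq, map_sum]
      simp only [map_tmul]
    rw [h0, ← I3]
    simp only [map_sum, tensorTensorTensorComm_tmul]
  -- the counit collapse
  have hε : ∑ i ∈ r.index, Coalgebra.counit (R := k) (r.left i)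
      * Coalgebra.counit (R := k) (r.right i) = Coalgebra.counit (R := k) a := by
    have h := congrArg (Coalgebra.counit (R := k)) (repr_counit_left r)
    rw [map_sum] at h
    rw [← h]
    exact Finset.sum_congr rfl fun i _ => by rw [map_smul, smul_eq_mul]
  -- the Hopf contraction
  have I2 : ∑ i ∈ r.index, ∑ t ∈ (rR i).index, ∑ s ∈ (rRL i t).index,
      (r.left i * 𝒮 ((rRL i t).left s)) ⊗ₜ[k] ((rRL i t).right s * 𝒮 ((rR i).right t))
      = Coalgebra.counit (R := k) a • (1 : H ⊗[k] H) := by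
    have hΛ := congrArg (map (Jmap k H) (Jmap k H)) I3
    simp only [map_sum, map_tmul, Jmap_tmul, Jmap_comul] at hΛ
    rw [hΛ]
    calc ∑ i ∈ r.index, (Coalgebra.counit (R := k) (r.left i) • (1 : H)) ⊗ₜ[k]
          (Coalgebra.counit (R := k) (r.right i) • (1 : H))
        = ∑ i ∈ r.index, (Coalgebra.counit (R := k) (r.left i)
            * Coalgebra.counit (R := k) (r.right i)) • ((1 : H) ⊗ₜ[k] (1 : H)) := by
          refine Finset.sum_congr rfl fun i _ => ?_
          simp only [TensorProduct.tmul_smul, TensorProduct.smul_tmul', smul_smul]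
          rw [mul_comm (Coalgebra.counit (R := k) (r.right i))
            (Coalgebra.counit (R := k) (r.left i))]
      _ = Coalgebra.counit (R := k) a • (1 : H ⊗[k] H) := by
          rw [← Finset.sum_smul, hε, Algebra.TensorProduct.one_def]
  -- main calculation
  calc adAct k H V (comulFour k H a)
      = ∑ i ∈ r.index, ∑ t ∈ (rR i).index, Fmap k H (r.left i) ((rR i).right t)
          (Coalgebra.comul (R := k) ((rR i).left t) * W) := by
        rw [hc4]
        simp only [map_sum]
        refine Finset.sum_congr rfl fun i _ => Finset.sum_congr rfl fun t _ => ?_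
        rw [e1 i t, map_sum]
        simp only [map_sum]
        refine Finset.sum_congr rfl fun s _ => ?_
        rw [hV]
        simp only [adAct, LinearMap.coe_comp, Function.comp_apply, map_tmul,
          LinearMap.mul'_apply, LinearMap.mulRight_apply, LinearMap.id_coe, id_eq,
          Fmap_tmul]
        rw [Finset.mul_sum, Finset.sum_mul]
        refine Finset.sum_congr rfl fun w _ => ?_
        rw [Algebra.TensorProduct.tmul_mul_tmul, Algebra.TensorProduct.tmul_mul_tmul]
        rw [antipode_mul', mul_assoc]
      _ = ∑ i ∈ r.index, ∑ t ∈ (rR i).index, Fmap k H (r.left i) ((rR i).right t)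
          (W * Coalgebra.comul (R := k) ((rR i).left t)) := by
        refine Finset.sum_congr rfl fun i _ => Finset.sum_congr rfl fun t _ => ?_
        rw [hcomm]
      _ = Bmap k H V (∑ i ∈ r.index, ∑ t ∈ (rR i).index, ∑ s ∈ (rRL i t).index,
            (r.left i * 𝒮 ((rRL i t).left s)) ⊗ₜ[k]
              ((rRL i t).right s * 𝒮 ((rR i).right t))) := by
        simp only [map_sum]
        refine Finset.sum_congr rfl fun i _ => Finset.sum_congr rfl fun t _ => ?_
        rw [e2 i t, map_sum]
        simp only [map_sum]
        refine Finset.sum_congr rfl fun s _ => ?_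
        rw [hV, Bmap_tmul]
        rw [Finset.mul_sum, Finset.sum_mul]
        refine Finset.sum_congr rfl fun w _ => ?_
        simp only [Fmap_tmul, Algebra.TensorProduct.tmul_mul_tmul, one_mul, mul_one]
        rw [antipode_mul']
        rw [← mul_assoc (r.left i), mul_assoc w.2]
      _ = Bmap k H V (Coalgebra.counit (R := k) a • (1 : H ⊗[k] H)) := by rw [I2]
      _ = Coalgebra.counit (R := k) a • V := by
        rw [map_smul, Algebra.TensorProduct.one_def, Bmap_tmul]
        rw [← Algebra.TensorProduct.one_def, one_mul, mul_one]
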